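/- arXiv:2505.00304 — 2 statements merged into one kernel-verified Lean document; each statement's English description precedes it below -/
import Mathlib

section
/- Let H be a real Hilbert space, m a positive integer, v₁, …, v_m ∈ H, δ ∈ ℝ^m, and μ > 0. Let K be the m × m Gram matrix with entries K_{ij} = ⟪v_i, v_j⟫, which is symmetric positive semidefinite, and let K^{1/2} denote its positive semidefinite square root. Then the matrix I + (2mμ)^{-1} K is positive definite (hence invertible), and the supremum over all f ∈ H of the strictly concave objective (1/m) Σ_{i=1}^m δ_i ⟪f, v_i⟫ − (1/(2m)) Σ_{i=1}^m ⟪f, v_i⟫² − μ ‖f‖² equals (1/(4 μ m²)) · δᵀ K^{1/2} (I + (2mμ)^{-1} K)^{-1} K^{1/2} δ. -/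
open Matrix

/-- The positive semidefinite square root of a positive semidefinite matrix, as defined in the
older Mathlib (removed since). -/
noncomputable def Matrix.PosSemidef.sqrt {n : Type*} [Fintype n] [DecidableEq n] {𝕜 : Type*}
    [RCLike 𝕜] [PartialOrder 𝕜] {A : Matrix n n 𝕜} (hA : A.PosSemidef) : Matrix n n 𝕜 :=
  hA.1.eigenvectorUnitary.1 * diagonal ((↑) ∘ (fun x : ℝ => Real.sqrt x) ∘ hA.1.eigenvalues) *
    (star hA.1.eigenvectorUnitary : Matrix n n 𝕜)

/-- Closed-form solution of the inner maximization of the regularized finite-sample minimax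
estimator: with Gram matrix `K_{ij} = ⟪v_i, v_j⟫` (symmetric positive semidefinite, with
positive semidefinite square root `K^{1/2}`), the matrix `I + (2mμ)⁻¹ K` is positive definite
(hence invertible), and
`sup_{f ∈ H} (1/m) ∑ δ_i ⟪f, v_i⟫ − (1/(2m)) ∑ ⟪f, v_i⟫² − μ‖f‖²
  = (1/(4μm²)) δᵀ K^{1/2} (I + (2mμ)⁻¹ K)⁻¹ K^{1/2} δ`. -/
theorem stmt_1 {H : Type*} [NormedAddCommGroup H] [InnerProductSpace ℝ H]
    {m : ℕ} (hm : 0 < m) (v : Fin m → H) (δ : Fin m → ℝ) (μ : ℝ) (hμ : 0 < μ)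
    (K : Matrix (Fin m) (Fin m) ℝ)
    (hKdef : ∀ i j, K i j = (inner ℝ (v i) (v j) : ℝ)) (hK : K.PosSemidef) :
    (1 + (2 * (m : ℝ) * μ)⁻¹ • K).PosDef ∧ IsUnit (1 + (2 * (m : ℝ) * μ)⁻¹ • K) ∧
    (⨆ f : H, ((1 / (m : ℝ)) * ∑ i, δ i * (inner ℝ f (v i) : ℝ)
        - (1 / (2 * (m : ℝ))) * ∑ i, (inner ℝ f (v i) : ℝ) ^ 2 - μ * ‖f‖ ^ 2))
      = (1 / (4 * μ * (m : ℝ) ^ 2)) *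
        (δ ⬝ᵥ ((hK.sqrt * (1 + (2 * (m : ℝ) * μ)⁻¹ • K)⁻¹ * hK.sqrt) *ᵥ δ)) := by
  have hm0 : (0:ℝ) < (m:ℝ) := by exact_mod_cast hm
  set c : ℝ := (2 * (m : ℝ) * μ)⁻¹ with hc_def
  have hc : 0 < c := by
    rw [hc_def]; positivity
  set N : Matrix (Fin m) (Fin m) ℝ := 1 + c • K with hN_def
  set S : Matrix (Fin m) (Fin m) ℝ := hK.sqrt with hS_def
  -- positive semidefiniteness of c • K
  have hcK : (c • K).PosSemidef := by
    constructor
    · show (c • K)ᴴ = c • K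
      rw [conjTranspose_smul, star_trivial, hK.1]
    · exact (hK.smul hc.le).2
  have hNpd : N.PosDef := Matrix.PosDef.one.add_posSemidef hcK
  have hUnit : IsUnit N := hNpd.isUnit
  have hdet : IsUnit N.det := (Matrix.isUnit_iff_isUnit_det N).1 hUnit
  have hNN : N * N⁻¹ = 1 := Matrix.mul_nonsing_inv N hdet
  have hNN' : N⁻¹ * N = 1 := Matrix.nonsing_inv_mul N hdet
  refine ⟨hNpd, hUnit, ?_⟩
  -- commutation facts
  have hSS : S * S = K := by
    have hU := Matrix.UnitaryGroup.star_mul_self hK.1.eigenvectorUnitary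
    rw [hS_def]
    conv_rhs => rw [hK.1.spectral_theorem]
    simp only [Matrix.PosSemidef.sqrt, Unitary.conjStarAlgAut_apply]
    rw [show ∀ A B C D E : Matrix (Fin m) (Fin m) ℝ, A * B * C * (D * E * C) = A * B * (C * D) * E * C
      from fun _ _ _ _ _ => by simp only [Matrix.mul_assoc]]
    have hD : diagonal ((RCLike.ofReal : ℝ → ℝ) ∘ (fun x : ℝ => Real.sqrt x) ∘ hK.1.eigenvalues)
        * diagonal ((RCLike.ofReal : ℝ → ℝ) ∘ (fun x : ℝ => Real.sqrt x) ∘ hK.1.eigenvalues)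
        = diagonal ((RCLike.ofReal : ℝ → ℝ) ∘ hK.1.eigenvalues) := by
      rw [diagonal_mul_diagonal]
      congr 1
      funext i
      simp [Real.mul_self_sqrt (hK.eigenvalues_nonneg i)]
    rw [hU, Matrix.mul_one, Matrix.mul_assoc (hK.1.eigenvectorUnitary : Matrix (Fin m) (Fin m) ℝ), hD]
  have hSK : S * K = K * S := by rw [← hSS, mul_assoc]
  have hSN : S * N = N * S := by
    rw [hN_def, mul_add, add_mul, mul_one, one_mul, mul_smul_comm, smul_mul_assoc, hSK]
  have hSNi : S * N⁻¹ = N⁻¹ * S := by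
    calc S * N⁻¹ = (N⁻¹ * N) * (S * N⁻¹) := by rw [hNN', one_mul]
    _ = N⁻¹ * ((N * S) * N⁻¹) := by rw [Matrix.mul_assoc, Matrix.mul_assoc]
    _ = N⁻¹ * ((S * N) * N⁻¹) := by rw [hSN]
    _ = N⁻¹ * (S * (N * N⁻¹)) := by rw [Matrix.mul_assoc]
    _ = N⁻¹ * S := by rw [hNN, mul_one]
  have hmat : S * N⁻¹ * S = K * N⁻¹ := by
    calc S * N⁻¹ * S = N⁻¹ * S * S := by rw [hSNi]
    _ = N⁻¹ * K := by rw [Matrix.mul_assoc, hSS]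
    _ = K * N⁻¹ := by
        have h1 : K * N = N * K := by
          rw [hN_def, mul_add, add_mul, mul_one, one_mul, mul_smul_comm, smul_mul_assoc]
        calc N⁻¹ * K = N⁻¹ * (K * (N * N⁻¹)) := by rw [hNN, mul_one]
        _ = N⁻¹ * ((K * N) * N⁻¹) := by rw [Matrix.mul_assoc]
        _ = N⁻¹ * ((N * K) * N⁻¹) := by rw [h1]
        _ = (N⁻¹ * N) * (K * N⁻¹) := by rw [Matrix.mul_assoc, Matrix.mul_assoc]
        _ = K * N⁻¹ := by rw [hNN', one_mul]
  -- the maximizer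
  set a : Fin m → ℝ := c • (N⁻¹ *ᵥ δ) with ha_def
  set fstar : H := ∑ i, a i • v i with hf_def
  have hNa : N *ᵥ a = c • δ := by
    rw [ha_def, mulVec_smul, mulVec_mulVec, hNN, one_mulVec]
  have hc2 : 2 * μ * c = 1 / (m:ℝ) := by
    rw [hc_def]; field_simp
  have hstat : ∀ i, (1 / (m:ℝ)) * δ i = (1 / (m:ℝ)) * (K *ᵥ a) i + 2 * μ * a i := by
    intro i
    have h : a i + c * (K *ᵥ a) i = c * δ i := by
      have := congrFun hNa i
      simpa [hN_def, add_mulVec, one_mulVec, smul_mulVec] using this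
    have hG : (1 / (m:ℝ)) * δ i - ((1 / (m:ℝ)) * (K *ᵥ a) i + 2 * μ * a i) = 0 := by
      linear_combination (-(2*μ)) * h + ((K *ᵥ a) i - δ i) * hc2
    linarith
  -- inner products with the maximizer
  have hsymm : ∀ i j, K j i = K i j := by
    intro i j
    have := hK.1.apply j i
    simpa using this.symm
  have hfv : ∀ j, (inner ℝ fstar (v j) : ℝ) = (K *ᵥ a) j := by
    intro j
    rw [hf_def, sum_inner]
    have : ∀ i, (inner ℝ (a i • v i) (v j) : ℝ) = K j i * a i := by
      intro i
      rw [real_inner_smul_left, ← hKdef, hsymm, mul_comm]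
    simp only [this]
    simp [Matrix.mulVec, dotProduct]
  have hnorm : ‖fstar‖ ^ 2 = a ⬝ᵥ (K *ᵥ a) := by
    rw [← real_inner_self_eq_norm_sq]
    conv_lhs => rw [hf_def]
    rw [show (inner ℝ (∑ i, a i • v i) fstar : ℝ) = ∑ i, a i * (inner ℝ fstar (v i) : ℝ) by
      rw [sum_inner]
      refine Finset.sum_congr rfl fun i _ => ?_
      rw [real_inner_smul_left, real_inner_comm]]
    simp only [hfv]
    simp [dotProduct]
  -- objective function
  set J : H → ℝ := fun f => (1 / (m : ℝ)) * ∑ i, δ i * (inner ℝ f (v i) : ℝ)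
      - (1 / (2 * (m : ℝ))) * ∑ i, (inner ℝ f (v i) : ℝ) ^ 2 - μ * ‖f‖ ^ 2 with hJ_def
  -- the key decomposition
  have hlin : ∀ g : H, (1 / (m:ℝ)) * ∑ i, δ i * (inner ℝ g (v i) : ℝ)
      - (1 / (m:ℝ)) * ∑ i, (inner ℝ fstar (v i) : ℝ) * (inner ℝ g (v i) : ℝ)
      - 2 * μ * (inner ℝ fstar g : ℝ) = 0 := by
    intro g
    have h1 : (inner ℝ fstar g : ℝ) = ∑ i, a i * (inner ℝ g (v i) : ℝ) := by
      rw [hf_def, sum_inner]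
      refine Finset.sum_congr rfl fun i _ => ?_
      rw [real_inner_smul_left, real_inner_comm]
    simp only [hfv, h1]
    rw [Finset.mul_sum, Finset.mul_sum, Finset.mul_sum, ← Finset.sum_sub_distrib,
      ← Finset.sum_sub_distrib]
    refine Finset.sum_eq_zero fun i _ => ?_
    linear_combination (inner ℝ g (v i) : ℝ) * hstat i
  have hkey : ∀ f : H, J f = J fstar
      - ((1 / (2 * (m:ℝ))) * ∑ i, (inner ℝ (f - fstar) (v i) : ℝ) ^ 2 + μ * ‖f - fstar‖ ^ 2) := by
    intro f
    set g : H := f - fstar with hg_def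
    have hfg : f = fstar + g := by rw [hg_def]; abel
    have hin : ∀ i, (inner ℝ f (v i) : ℝ) = (inner ℝ fstar (v i) : ℝ) + (inner ℝ g (v i) : ℝ) := by
      intro i; rw [hfg, inner_add_left]
    have hnrm : ‖f‖ ^ 2 = ‖fstar‖ ^ 2 + 2 * (inner ℝ fstar g : ℝ) + ‖g‖ ^ 2 := by
      rw [hfg]; exact norm_add_sq_real _ _
    have hsum1 : ∑ i, δ i * (inner ℝ f (v i) : ℝ)
        = ∑ i, δ i * (inner ℝ fstar (v i) : ℝ) + ∑ i, δ i * (inner ℝ g (v i) : ℝ) := by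
      rw [← Finset.sum_add_distrib]
      exact Finset.sum_congr rfl fun i _ => by rw [hin]; ring
    have hsum2 : ∑ i, (inner ℝ f (v i) : ℝ) ^ 2
        = ∑ i, (inner ℝ fstar (v i) : ℝ) ^ 2
          + 2 * ∑ i, (inner ℝ fstar (v i) : ℝ) * (inner ℝ g (v i) : ℝ)
          + ∑ i, (inner ℝ g (v i) : ℝ) ^ 2 := by
      rw [Finset.mul_sum, ← Finset.sum_add_distrib, ← Finset.sum_add_distrib]
      exact Finset.sum_congr rfl fun i _ => by rw [hin]; ring
    have hz := hlin g
    rw [hJ_def]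
    simp only []
    rw [hsum1, hsum2, hnrm]
    linear_combination hz
  -- the value at the maximizer
  have hJstar : J fstar = (1 / (2 * (m:ℝ))) * (δ ⬝ᵥ (K *ᵥ a)) := by
    have hA : (1 / (m:ℝ)) * ∑ i, δ i * (inner ℝ fstar (v i) : ℝ)
        = (1 / (m:ℝ)) * ∑ i, ((K *ᵥ a) i) ^ 2 + 2 * μ * ∑ i, a i * (K *ᵥ a) i := by
      simp only [hfv]
      rw [Finset.mul_sum, Finset.mul_sum, Finset.mul_sum, ← Finset.sum_add_distrib]
      refine Finset.sum_congr rfl fun i _ => ?_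
      linear_combination ((K *ᵥ a) i) * hstat i
    have hdp : δ ⬝ᵥ (K *ᵥ a) = ∑ i, δ i * (K *ᵥ a) i := by
      simp [dotProduct]
    have hdp2 : (1 / (2 * (m:ℝ))) * ∑ i, δ i * (K *ᵥ a) i
        = (1/2) * ((1 / (m:ℝ)) * ∑ i, δ i * (K *ᵥ a) i) := by ring
    rw [hJ_def]
    simp only [hfv, hnorm]
    rw [hdp]
    have hA' : (1 / (m:ℝ)) * ∑ i, δ i * (K *ᵥ a) i
        = (1 / (m:ℝ)) * ∑ i, ((K *ᵥ a) i) ^ 2 + 2 * μ * ∑ i, a i * (K *ᵥ a) i := by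
      rw [← hA]; simp only [hfv]
    have hdp3 : a ⬝ᵥ (K *ᵥ a) = ∑ i, a i * (K *ᵥ a) i := by simp [dotProduct]
    rw [hdp3]
    linear_combination hA' - (1/2) * hA'
  -- sup is attained at fstar
  have hub : ∀ f : H, J f ≤ J fstar := by
    intro f
    rw [hkey f]
    have h1 : 0 ≤ (1 / (2 * (m:ℝ))) * ∑ i, (inner ℝ (f - fstar) (v i) : ℝ) ^ 2
        + μ * ‖f - fstar‖ ^ 2 := by positivity
    linarith
  have hbdd : BddAbove (Set.range J) := ⟨J fstar, by rintro _ ⟨f, rfl⟩; exact hub f⟩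
  have hsup : (⨆ f : H, J f) = J fstar :=
    le_antisymm (ciSup_le hub) (le_ciSup hbdd fstar)
  -- final closed form
  have hKa : K *ᵥ a = c • ((S * N⁻¹ * S) *ᵥ δ) := by
    rw [hmat, ha_def, mulVec_smul, mulVec_mulVec]
  have hfin : (1 / (2 * (m:ℝ))) * (δ ⬝ᵥ (K *ᵥ a))
      = (1 / (4 * μ * (m : ℝ) ^ 2)) * (δ ⬝ᵥ ((S * N⁻¹ * S) *ᵥ δ)) := by
    rw [hKa, dotProduct_smul, smul_eq_mul, hc_def]
    ring
  calc (⨆ f : H, J f) = J fstar := hsup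
  _ = (1 / (4 * μ * (m : ℝ) ^ 2)) * (δ ⬝ᵥ ((S * N⁻¹ * S) *ᵥ δ)) := by
      rw [hJstar, hfin]
end

section
/- Let (X, 𝒜, μ) be a probability space, κ a Markov kernel from X to X, r : X → ℝ bounded measurable, γ ∈ [0, 1), and C ≥ 0 a constant such that ∫ (∫ g(y) d(κ x)(y))² dμ(x) ≤ C² ∫ g(x)² dμ(x) for every bounded measurable g : X → ℝ, with γ C < 1. Suppose Q : X → ℝ is bounded measurable and satisfies the Bellman equation Q(x) = r(x) + γ ∫ Q(y) d(κ x)(y) for μ-almost every x. Then for every bounded measurable q : X → ℝ, ‖q − Q‖_{L²(μ)} ≤ (1 − γ C)^{-1} ‖q − (r + γ κ q)‖_{L²(μ)}, where (κ q)(x) = ∫ q(y) d(κ x)(y). -/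
open MeasureTheory ProbabilityTheory
open scoped ENNReal

lemma memLp2_of_bdd {X : Type*} [MeasurableSpace X] (μ : Measure X) [IsFiniteMeasure μ]
    {f : X → ℝ} (hm : Measurable f) (hb : ∃ M : ℝ, ∀ x, |f x| ≤ M) :
    MemLp f 2 μ := by
  obtain ⟨M, hM⟩ := hb
  exact (memLp_top_of_bound hm.aestronglyMeasurable M
    (Filter.Eventually.of_forall fun x => by simpa using hM x)).mono_exponent le_top

lemma integrable_of_bdd {X : Type*} [MeasurableSpace X] (μ : Measure X) [IsFiniteMeasure μ]
    {f : X → ℝ} (hm : Measurable f) (hb : ∃ M : ℝ, ∀ x, |f x| ≤ M) :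
    Integrable f μ :=
  (memLp2_of_bdd μ hm hb).integrable (by norm_num)

lemma minkowski_sq {X : Type*} [MeasurableSpace X] (μ : Measure X) [IsFiniteMeasure μ]
    {f g : X → ℝ} (hfm : Measurable f) (hfb : ∃ M : ℝ, ∀ x, |f x| ≤ M)
    (hgm : Measurable g) (hgb : ∃ M : ℝ, ∀ x, |g x| ≤ M) :
    Real.sqrt (∫ x, (f x + g x) ^ 2 ∂μ) ≤
      Real.sqrt (∫ x, f x ^ 2 ∂μ) + Real.sqrt (∫ x, g x ^ 2 ∂μ) := by
  have hf2 := memLp2_of_bdd μ hfm hfb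
  have hg2 := memLp2_of_bdd μ hgm hgb
  have hif : Integrable (fun x => f x ^ 2) μ := hf2.integrable_sq
  have hig : Integrable (fun x => g x ^ 2) μ := hg2.integrable_sq
  have hifg : Integrable (fun x => f x * g x) μ := by
    obtain ⟨Mf, hMf⟩ := hfb; obtain ⟨Mg, hMg⟩ := hgb
    exact integrable_of_bdd μ (hfm.mul hgm)
      ⟨|Mf| * |Mg|, fun x => by
        rw [abs_mul]
        exact mul_le_mul ((hMf x).trans (le_abs_self _)) ((hMg x).trans (le_abs_self _))
          (abs_nonneg _) (abs_nonneg _)⟩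
  set A := ∫ x, f x ^ 2 ∂μ with hAdef
  set B := ∫ x, g x ^ 2 ∂μ with hBdef
  have hA : 0 ≤ A := integral_nonneg fun x => sq_nonneg _
  have hB : 0 ≤ B := integral_nonneg fun x => sq_nonneg _
  have hCS : ∫ x, f x * g x ∂μ ≤ Real.sqrt A * Real.sqrt B := by
    have h1 : ∫ x, f x * g x ∂μ ≤ ∫ x, |f x| * |g x| ∂μ := by
      refine integral_mono hifg (by simpa [abs_mul] using hifg.abs) fun x => ?_
      calc f x * g x ≤ |f x * g x| := le_abs_self _
        _ = |f x| * |g x| := abs_mul _ _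
    have hconj : Real.HolderConjugate 2 2 := Real.holderConjugate_iff.mpr ⟨one_lt_two, by norm_num⟩
    have hfa : MemLp (fun x => |f x|) (ENNReal.ofReal 2) μ := by
      have : (ENNReal.ofReal 2) = (2 : ℝ≥0∞) := by norm_num
      rw [this]; simpa [Real.norm_eq_abs] using hf2.norm
    have hga : MemLp (fun x => |g x|) (ENNReal.ofReal 2) μ := by
      have : (ENNReal.ofReal 2) = (2 : ℝ≥0∞) := by norm_num
      rw [this]; simpa [Real.norm_eq_abs] using hg2.norm
    have h2 := integral_mul_le_Lp_mul_Lq_of_nonneg hconj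
      (Filter.Eventually.of_forall fun x => abs_nonneg (f x))
      (Filter.Eventually.of_forall fun x => abs_nonneg (g x)) hfa hga
    have hAeq : ∫ x, |f x| ^ (2:ℝ) ∂μ = A := by
      rw [hAdef]
      refine integral_congr_ae (Filter.Eventually.of_forall fun x => ?_)
      simp only [show ((2:ℝ)) = ((2:ℕ):ℝ) by norm_num, Real.rpow_natCast, sq_abs]
    have hBeq : ∫ x, |g x| ^ (2:ℝ) ∂μ = B := by
      rw [hBdef]
      refine integral_congr_ae (Filter.Eventually.of_forall fun x => ?_)
      simp only [show ((2:ℝ)) = ((2:ℕ):ℝ) by norm_num, Real.rpow_natCast, sq_abs]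
    rw [hAeq, hBeq] at h2
    calc ∫ x, f x * g x ∂μ ≤ ∫ x, |f x| * |g x| ∂μ := h1
      _ ≤ A ^ ((1:ℝ)/2) * B ^ ((1:ℝ)/2) := h2
      _ = Real.sqrt A * Real.sqrt B := by rw [Real.sqrt_eq_rpow, Real.sqrt_eq_rpow]
  have hexp : ∫ x, (f x + g x) ^ 2 ∂μ = A + 2 * ∫ x, f x * g x ∂μ + B := by
    have h : ∀ x, (f x + g x) ^ 2 = f x ^ 2 + (2 * (f x * g x) + g x ^ 2) := fun x => by ring
    simp_rw [h]
    have e1 : ∫ x, (f x ^ 2 + (2 * (f x * g x) + g x ^ 2)) ∂μ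
        = (∫ x, f x ^ 2 ∂μ) + ∫ x, (2 * (f x * g x) + g x ^ 2) ∂μ :=
      integral_add hif ((hifg.const_mul 2).add hig)
    have e2 : ∫ x, (2 * (f x * g x) + g x ^ 2) ∂μ
        = (∫ x, 2 * (f x * g x) ∂μ) + ∫ x, g x ^ 2 ∂μ :=
      integral_add (hifg.const_mul 2) hig
    rw [e1, e2, MeasureTheory.integral_const_mul]
    ring
  have key : ∫ x, (f x + g x) ^ 2 ∂μ ≤ (Real.sqrt A + Real.sqrt B) ^ 2 := by
    rw [hexp]
    have hA' : Real.sqrt A ^ 2 = A := Real.sq_sqrt hA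
    have hB' : Real.sqrt B ^ 2 = B := Real.sq_sqrt hB
    nlinarith [hCS]
  calc Real.sqrt (∫ x, (f x + g x) ^ 2 ∂μ) ≤ Real.sqrt ((Real.sqrt A + Real.sqrt B) ^ 2) :=
        Real.sqrt_le_sqrt key
    _ = Real.sqrt A + Real.sqrt B :=
        Real.sqrt_sq (by positivity)

lemma kernel_int_meas {X : Type*} [MeasurableSpace X] (κ : Kernel X X) [IsMarkovKernel κ]
    {g : X → ℝ} (hm : Measurable g) :
    Measurable fun x => ∫ y, g y ∂(κ x) := by
  have : StronglyMeasurable (Function.uncurry fun (_ : X) (y : X) => g y) :=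
    (hm.comp measurable_snd).stronglyMeasurable
  exact this.integral_kernel_prod_right.measurable

lemma kernel_int_bdd {X : Type*} [MeasurableSpace X] (κ : Kernel X X) [IsMarkovKernel κ]
    {g : X → ℝ} {M : ℝ} (hM : ∀ x, |g x| ≤ M) (x : X) :
    |∫ y, g y ∂(κ x)| ≤ M := by
  have := norm_integral_le_of_norm_le_const (μ := κ x) (f := g) (C := M)
    (Filter.Eventually.of_forall fun y => by simpa using hM y)
  simpa [Real.norm_eq_abs] using this

/-- Bellman-residual-to-estimation-error bound: if the transition operator `κ` is bounded on
`L²(μ)` with constant `C` (over bounded measurable functions), `γC < 1`, and the bounded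
measurable `Q` solves the Bellman evaluation equation `Q = r + γ κ Q` μ-a.e., then for every
bounded measurable `q`,
`‖q − Q‖_{L²(μ)} ≤ (1 − γC)⁻¹ ‖q − (r + γ κ q)‖_{L²(μ)}`. -/
theorem stmt_10 {X : Type*} [MeasurableSpace X] (μ : Measure X) [IsProbabilityMeasure μ]
    (κ : Kernel X X) [IsMarkovKernel κ]
    (r : X → ℝ) (hrm : Measurable r) (hrb : ∃ M : ℝ, ∀ x, |r x| ≤ M)
    (γ : ℝ) (hγ0 : 0 ≤ γ) (hγ1 : γ < 1)
    (C : ℝ) (hC0 : 0 ≤ C)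
    (hCop : ∀ g : X → ℝ, Measurable g → (∃ M : ℝ, ∀ x, |g x| ≤ M) →
      ∫ x, (∫ y, g y ∂(κ x)) ^ 2 ∂μ ≤ C ^ 2 * ∫ x, (g x) ^ 2 ∂μ)
    (hγC : γ * C < 1)
    (Q : X → ℝ) (hQm : Measurable Q) (hQb : ∃ M : ℝ, ∀ x, |Q x| ≤ M)
    (hQbellman : ∀ᵐ x ∂μ, Q x = r x + γ * ∫ y, Q y ∂(κ x)) :
    ∀ q : X → ℝ, Measurable q → (∃ M : ℝ, ∀ x, |q x| ≤ M) →
      Real.sqrt (∫ x, (q x - Q x) ^ 2 ∂μ)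
        ≤ (1 - γ * C)⁻¹ *
          Real.sqrt (∫ x, (q x - (r x + γ * ∫ y, q y ∂(κ x))) ^ 2 ∂μ) := by
  intro q hqm hqb
  obtain ⟨Mq, hMq⟩ := hqb
  obtain ⟨MQ, hMQ⟩ := hQb
  set f : X → ℝ := fun x => q x - Q x with hfdef
  have hfm : Measurable f := hqm.sub hQm
  have hfb : ∀ x, |f x| ≤ Mq + MQ := fun x =>
    (abs_sub (q x) (Q x)).trans (add_le_add (hMq x) (hMQ x))
  set Tf : X → ℝ := fun x => ∫ y, f y ∂(κ x) with hTfdef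
  have hTfm : Measurable Tf := kernel_int_meas κ hfm
  have hTfb : ∀ x, |Tf x| ≤ Mq + MQ := kernel_int_bdd κ hfb
  have hsplit : ∀ x, Tf x = (∫ y, q y ∂(κ x)) - ∫ y, Q y ∂(κ x) := fun x =>
    integral_sub (integrable_of_bdd (κ x) hqm ⟨Mq, hMq⟩) (integrable_of_bdd (κ x) hQm ⟨MQ, hMQ⟩)
  have hres : ∀ᵐ x ∂μ, q x - (r x + γ * ∫ y, q y ∂(κ x)) = f x - γ * Tf x := by
    filter_upwards [hQbellman] with x hx
    rw [hsplit x, hfdef]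
    simp only
    rw [hx]
    ring
  have hreseq : ∫ x, (q x - (r x + γ * ∫ y, q y ∂(κ x))) ^ 2 ∂μ
      = ∫ x, (f x - γ * Tf x) ^ 2 ∂μ := by
    refine integral_congr_ae ?_
    filter_upwards [hres] with x hx
    rw [hx]
  set N : ℝ := Real.sqrt (∫ x, f x ^ 2 ∂μ) with hNdef
  set R : ℝ := Real.sqrt (∫ x, (f x - γ * Tf x) ^ 2 ∂μ) with hRdef
  have hN0 : 0 ≤ N := Real.sqrt_nonneg _
  have hR0 : 0 ≤ R := Real.sqrt_nonneg _
  have hAm : Measurable fun x => f x - γ * Tf x := hfm.sub (hTfm.const_mul γ)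
  have hAb : ∃ M : ℝ, ∀ x, |f x - γ * Tf x| ≤ M :=
    ⟨(Mq + MQ) + |γ| * (Mq + MQ), fun x => by
      calc |f x - γ * Tf x| ≤ |f x| + |γ * Tf x| := abs_sub _ _
        _ ≤ (Mq + MQ) + |γ| * (Mq + MQ) := by
            rw [abs_mul]
            exact add_le_add (hfb x) (mul_le_mul_of_nonneg_left (hTfb x) (abs_nonneg _))⟩
  have hBm : Measurable fun x => γ * Tf x := hTfm.const_mul γ
  have hBb : ∃ M : ℝ, ∀ x, |γ * Tf x| ≤ M :=
    ⟨|γ| * (Mq + MQ), fun x => by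
      rw [abs_mul]; exact mul_le_mul_of_nonneg_left (hTfb x) (abs_nonneg _)⟩
  have hmink : N ≤ R + Real.sqrt (∫ x, (γ * Tf x) ^ 2 ∂μ) := by
    have := minkowski_sq μ hAm hAb hBm hBb
    have heq : ∀ x, (f x - γ * Tf x) + γ * Tf x = f x := fun x => by ring
    simp_rw [heq] at this
    exact this
  have hγterm : Real.sqrt (∫ x, (γ * Tf x) ^ 2 ∂μ) = γ * Real.sqrt (∫ x, Tf x ^ 2 ∂μ) := by
    have h : ∀ x, (γ * Tf x) ^ 2 = γ ^ 2 * Tf x ^ 2 := fun x => by ring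
    simp_rw [h]
    rw [MeasureTheory.integral_const_mul, Real.sqrt_mul (sq_nonneg γ), Real.sqrt_sq hγ0]
  have hop : Real.sqrt (∫ x, Tf x ^ 2 ∂μ) ≤ C * N := by
    have h1 := hCop f hfm ⟨Mq + MQ, hfb⟩
    have h2 : Real.sqrt (∫ x, (∫ y, f y ∂(κ x)) ^ 2 ∂μ)
        ≤ Real.sqrt (C ^ 2 * ∫ x, f x ^ 2 ∂μ) := Real.sqrt_le_sqrt h1
    rwa [Real.sqrt_mul (sq_nonneg C), Real.sqrt_sq hC0, ← hNdef] at h2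
  have hfinal : N ≤ R + γ * (C * N) := by
    calc N ≤ R + Real.sqrt (∫ x, (γ * Tf x) ^ 2 ∂μ) := hmink
      _ = R + γ * Real.sqrt (∫ x, Tf x ^ 2 ∂μ) := by rw [hγterm]
      _ ≤ R + γ * (C * N) := add_le_add_right (mul_le_mul_of_nonneg_left hop hγ0) R
  have hpos : 0 < 1 - γ * C := by linarith
  rw [hreseq]
  rw [inv_mul_eq_div, le_div_iff₀ hpos]
  nlinarith [hfinal]
end
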